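/- Suppose the real random variable L(X) satisfies the tail asymptotic lim_{u→∞} log P(L(X) > u) / Λ(u^{1/ρ}) = −I* with I* > 0, where Λ:(0,∞)→(0,∞) is eventually strictly increasing, Λ(x) → ∞, and Λ ∈ RV(α) for some α > 0. Then for every δ > 0 there exists β_0 > 0 such that E[((L(X) − v_β)^+)²] ≥ β^{1+δ} for all β ∈ (0, β_0). In particular, E[((L(X) − v_β)^+)²] ≥ P(L(X) ≥ v_β + 1), and the latter equals β^{1+o(1)} as β → 0. -/

import Mathlib

open MeasureTheory Filter Real Topology ProbabilityTheory

/-- A function `f : (0,∞) → (0,∞)` is regularly varying with index `p`. -/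
def RegVary (f : ℝ → ℝ) (p : ℝ) : Prop :=
  ∀ x : ℝ, 0 < x → Tendsto (fun t => f (t * x) / f t) atTop (𝓝 (x ^ p))

/-- Value at risk at tail probability level `β` of the random variable `Z`. -/
noncomputable def VaR {Ω : Type*} [MeasurableSpace Ω] (μ : Measure Ω) (Z : Ω → ℝ) (β : ℝ) : ℝ :=
  sInf {u : ℝ | 1 - β ≤ (μ {ω | Z ω ≤ u}).toReal}

section AuxLemmas

lemma lam_log_lower (Λ : ℝ → ℝ) (α : ℝ) (hα : 0 < α) (hΛpos : ∀ x, 0 < x → 0 < Λ x)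
    (x₀ : ℝ) (hmono : StrictMonoOn Λ (Set.Ici x₀)) (hRV : RegVary Λ α) (C : ℝ) :
    ∀ᶠ t in atTop, C * Real.log t ≤ Λ t := by
  rcases le_or_gt C 0 with hC | hC
  · filter_upwards [eventually_ge_atTop (1:ℝ)] with t ht
    have h1 := hΛpos t (by linarith)
    have hlog : 0 ≤ Real.log t := Real.log_nonneg ht
    nlinarith [mul_nonpos_of_nonpos_of_nonneg hC hlog]
  have h2α : (1:ℝ) < 2 ^ α := by
    rw [show (1:ℝ) = (2:ℝ) ^ (0:ℝ) by simp]
    exact Real.rpow_lt_rpow_of_exponent_lt (by norm_num) hα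
  set K : ℝ := (1 + 2 ^ α) / 2 with hKdef
  have hK1 : 1 < K := by rw [hKdef]; linarith
  have hK2 : K < 2 ^ α := by rw [hKdef]; linarith
  -- eventual doubling
  have hdbl : ∀ᶠ t in atTop, K * Λ t ≤ Λ (t * 2) := by
    have h := hRV 2 (by norm_num)
    have hev : ∀ᶠ t in atTop, K < Λ (t * 2) / Λ t := h.eventually (eventually_gt_nhds hK2)
    filter_upwards [hev, eventually_gt_atTop (0:ℝ)] with t h1 h2
    have hpt := hΛpos t h2
    rw [lt_div_iff₀ hpt] at h1
    linarith
  obtain ⟨a, ha⟩ := eventually_atTop.mp hdbl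
  set t₀ : ℝ := max a (max x₀ 1) with ht₀def
  have ht₀a : a ≤ t₀ := le_max_left _ _
  have ht₀x : x₀ ≤ t₀ := le_trans (le_max_left _ _) (le_max_right _ _)
  have ht₀1 : (1:ℝ) ≤ t₀ := le_trans (le_max_right _ _) (le_max_right _ _)
  have ht₀pos : (0:ℝ) < t₀ := lt_of_lt_of_le one_pos ht₀1
  have hΛt₀pos : 0 < Λ t₀ := hΛpos t₀ ht₀pos
  have hdbl' : ∀ t, t₀ ≤ t → K * Λ t ≤ Λ (t * 2) := fun t ht => ha t (le_trans ht₀a ht)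
  -- iteration
  have hiter : ∀ n : ℕ, K ^ n * Λ t₀ ≤ Λ (2 ^ n * t₀) := by
    intro n
    induction n with
    | zero => simp
    | succ n ih =>
      have h2n : (1:ℝ) ≤ 2 ^ n := one_le_pow₀ (by norm_num)
      have hge : t₀ ≤ 2 ^ n * t₀ := le_mul_of_one_le_left ht₀pos.le h2n
      have := hdbl' (2 ^ n * t₀) hge
      have hKn : (0:ℝ) ≤ K ^ n := by positivity
      calc K ^ (n+1) * Λ t₀ = K * (K ^ n * Λ t₀) := by ring
        _ ≤ K * Λ (2 ^ n * t₀) := by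
            have := mul_le_mul_of_nonneg_left ih (le_of_lt (lt_trans one_pos hK1))
            linarith [mul_le_mul_of_nonneg_left ih (show (0:ℝ) ≤ K by linarith)]
        _ ≤ Λ (2 ^ n * t₀ * 2) := hdbl' _ hge
        _ = Λ (2 ^ (n+1) * t₀) := by ring_nf
  -- K^n / n → ∞
  have hlogK : 0 < Real.log K := Real.log_pos hK1
  have hKn_div : Tendsto (fun n : ℕ => K ^ n / n) atTop atTop := by
    have h1 : Tendsto (fun n : ℕ => (n : ℝ) * Real.log K) atTop atTop :=
      (tendsto_natCast_atTop_atTop).atTop_mul_const hlogK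
    have h2 : Tendsto (fun x : ℝ => Real.exp x / x ^ 1) atTop atTop :=
      Real.tendsto_exp_div_pow_atTop 1
    have h3 := (h2.comp h1).atTop_mul_const hlogK
    apply h3.congr'
    filter_upwards [eventually_ge_atTop 1] with n hn
    have hn0 : (0:ℝ) < (n:ℝ) := by exact_mod_cast Nat.lt_of_lt_of_le Nat.zero_lt_one hn
    simp only [Function.comp, pow_one]
    rw [Real.exp_nat_mul, Real.exp_log (by linarith : (0:ℝ) < K)]
    field_simp
  set M : ℝ := C * (2 * Real.log 2 + |Real.log t₀|) / Λ t₀ with hMdef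
  obtain ⟨N, hN⟩ := eventually_atTop.mp (hKn_div.eventually_ge_atTop M)
  -- final
  filter_upwards [eventually_ge_atTop (2 ^ (max N 1) * t₀), eventually_ge_atTop (1:ℝ)] with t htN ht1
  have htpos : (0:ℝ) < t := lt_of_lt_of_le one_pos ht1
  set x : ℝ := t / t₀ with hxdef
  have hxpos : 0 < x := div_pos htpos ht₀pos
  have hx2N : (2:ℝ) ^ (max N 1) ≤ x := (le_div_iff₀ ht₀pos).mpr htN
  have hx1 : (1:ℝ) ≤ x := le_trans (one_le_pow₀ (by norm_num)) hx2N
  set n : ℕ := ⌊Real.logb 2 x⌋₊ with hndef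
  have hlogb_nonneg : 0 ≤ Real.logb 2 x := Real.logb_nonneg (by norm_num) hx1
  have hnN : max N 1 ≤ n := by
    rw [hndef]
    apply Nat.le_floor
    have h2p : (0:ℝ) < (2:ℝ) ^ (max N 1) := by positivity
    have hlb : Real.logb 2 ((2:ℝ) ^ (max N 1)) ≤ Real.logb 2 x :=
      Real.logb_le_logb_of_le (by norm_num) h2p hx2N
    rwa [show ((2:ℝ) ^ (max N 1)) = (2:ℝ) ^ ((max N 1 : ℕ):ℝ) from (Real.rpow_natCast 2 _).symm,
      Real.logb_rpow (by norm_num) (by norm_num)] at hlb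
  have hn1 : (2:ℝ) ^ n ≤ x := by
    have h1 : ((n:ℝ)) ≤ Real.logb 2 x := Nat.floor_le hlogb_nonneg
    have := Real.rpow_le_rpow_of_exponent_le (by norm_num : (1:ℝ) ≤ 2) h1
    rwa [Real.rpow_logb (by norm_num) (by norm_num) hxpos, Real.rpow_natCast] at this
  have hn2 : x < 2 ^ (n + 1) := by
    have h1 : Real.logb 2 x < (n:ℝ) + 1 := Nat.lt_floor_add_one _
    have := Real.rpow_lt_rpow_of_exponent_lt (by norm_num : (1:ℝ) < 2) h1
    rw [Real.rpow_logb (by norm_num) (by norm_num) hxpos] at this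
    calc x < (2:ℝ) ^ ((n:ℝ) + 1) := this
      _ = 2 ^ (n+1) := by
          rw [show ((n:ℝ) + 1) = ((n+1 : ℕ) : ℝ) by push_cast; ring, Real.rpow_natCast]
  have ht_lb : 2 ^ n * t₀ ≤ t := by
    have := mul_le_mul_of_nonneg_right hn1 ht₀pos.le
    rwa [hxdef, div_mul_cancel₀ t (ne_of_gt ht₀pos)] at this
  have ht_ub : t < 2 ^ (n+1) * t₀ := by
    have := mul_lt_mul_of_pos_right hn2 ht₀pos
    rwa [hxdef, div_mul_cancel₀ t (ne_of_gt ht₀pos)] at this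
  have hmem1 : (2:ℝ) ^ n * t₀ ∈ Set.Ici x₀ := by
    have : t₀ ≤ 2 ^ n * t₀ := le_mul_of_one_le_left ht₀pos.le (one_le_pow₀ (by norm_num))
    exact le_trans ht₀x this
  have hmem2 : t ∈ Set.Ici x₀ := le_trans hmem1 ht_lb
  have hchain1 : Λ (2 ^ n * t₀) ≤ Λ t := by
    rcases eq_or_lt_of_le ht_lb with h | h
    · rw [h]
    · exact (hmono hmem1 hmem2 h).le
  have hKiter := hiter n
  have hnN' : N ≤ n := le_trans (le_max_left _ _) hnN
  have hn1' : 1 ≤ n := le_trans (le_max_right _ _) hnN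
  have hMn := hN n hnN'
  have hnR : (1:ℝ) ≤ (n:ℝ) := by exact_mod_cast hn1'
  have hnpos : (0:ℝ) < (n:ℝ) := by linarith
  have hKM : (n:ℝ) * M ≤ K ^ n := by
    rw [le_div_iff₀ hnpos] at hMn
    nlinarith [hMn]
  have key1 : C * ((n:ℝ) * (2 * Real.log 2 + |Real.log t₀|)) ≤ K ^ n * Λ t₀ := by
    have : (n:ℝ) * M * Λ t₀ ≤ K ^ n * Λ t₀ := mul_le_mul_of_nonneg_right hKM hΛt₀pos.le
    rw [hMdef] at this
    calc C * ((n:ℝ) * (2 * Real.log 2 + |Real.log t₀|))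
        = (n:ℝ) * (C * (2 * Real.log 2 + |Real.log t₀|) / Λ t₀) * Λ t₀ := by
          field_simp
      _ ≤ K ^ n * Λ t₀ := this
  have hlog2pos : 0 < Real.log 2 := Real.log_pos (by norm_num)
  have key2 : Real.log t ≤ (n:ℝ) * (2 * Real.log 2 + |Real.log t₀|) := by
    have hlt : Real.log t ≤ Real.log (2 ^ (n+1) * t₀) :=
      Real.log_le_log htpos ht_ub.le
    rw [Real.log_mul (by positivity) (ne_of_gt ht₀pos), Real.log_pow] at hlt
    have h1 : Real.log t₀ ≤ |Real.log t₀| := le_abs_self _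
    have h2 : ((n:ℝ) + 1) ≤ 2 * (n:ℝ) := by linarith
    have h3 : |Real.log t₀| ≤ (n:ℝ) * |Real.log t₀| := le_mul_of_one_le_left (abs_nonneg _) hnR
    push_cast at hlt
    nlinarith
  have hfin := mul_le_mul_of_nonneg_left key2 hC.le
  linarith [key1, hKiter, hchain1]


lemma lam_shift_ratio (Λ : ℝ → ℝ) (α : ℝ) (hα : 0 < α) (hΛpos : ∀ x, 0 < x → 0 < Λ x)
    (x₀ : ℝ) (hmono : StrictMonoOn Λ (Set.Ici x₀)) (hRV : RegVary Λ α)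
    (ρ : ℝ) (hρ : 0 < ρ) :
    Tendsto (fun u : ℝ => Λ ((u+1) ^ (1/ρ)) / Λ ((u-1) ^ (1/ρ))) atTop (𝓝 1) := by
  have hb : Tendsto (fun u : ℝ => (u - 1) ^ (1/ρ)) atTop atTop := by
    have h1 : Tendsto (fun u : ℝ => u - 1) atTop atTop :=
      tendsto_atTop_add_const_right _ (-1) tendsto_id
    exact (tendsto_rpow_atTop (by positivity)).comp h1
  rw [Metric.tendsto_nhds]
  intro ε hε
  set ε' : ℝ := min ε 1 / 2 with hε'def
  have hε'pos : 0 < ε' := by positivity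
  have hε'lt : ε' < ε := by
    rcases min_cases ε 1 with ⟨h1, h2⟩ | ⟨h1, h2⟩ <;> rw [hε'def, h1] <;> linarith
  set c : ℝ := (1 + ε') ^ (1/α) with hcdef
  have h1ε' : (1:ℝ) < 1 + ε' := by linarith
  have hc1 : 1 < c := Real.one_lt_rpow_iff_of_pos (by linarith) |>.mpr (Or.inl ⟨h1ε', by positivity⟩)
  have hcpos : 0 < c := by linarith
  have hcα : c ^ α = 1 + ε' := by
    rw [hcdef, ← Real.rpow_mul (by linarith : (0:ℝ) ≤ 1 + ε'),
      one_div_mul_cancel (ne_of_gt hα), Real.rpow_one]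
  -- RV at c : eventually in t, Λ (t*c)/Λ t < 1 + ε
  have hRVc : Tendsto (fun t => Λ (t * c) / Λ t) atTop (𝓝 (1 + ε')) := by
    have := hRV c hcpos
    rwa [hcα] at this
  have hev1 : ∀ᶠ t : ℝ in atTop, Λ (t * c) / Λ t < 1 + ε :=
    hRVc.eventually_lt_const (by linarith)
  -- compose along b
  have hev2 : ∀ᶠ u : ℝ in atTop, Λ ((u-1) ^ (1/ρ) * c) / Λ ((u-1) ^ (1/ρ)) < 1 + ε :=
    hb.eventually hev1
  have hcρ : (1:ℝ) < c ^ ρ := Real.one_lt_rpow_iff_of_pos hcpos |>.mpr (Or.inl ⟨hc1, hρ⟩)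
  have hlin : ∀ᶠ u : ℝ in atTop, u + 1 ≤ c ^ ρ * (u - 1) := by
    filter_upwards [eventually_ge_atTop ((1 + c ^ ρ) / (c ^ ρ - 1))] with u hu
    rw [div_le_iff₀ (by linarith)] at hu
    nlinarith
  have hx₀ : ∀ᶠ u : ℝ in atTop, x₀ ≤ (u - 1) ^ (1/ρ) := hb.eventually_ge_atTop x₀
  filter_upwards [hev2, hlin, hx₀, eventually_gt_atTop (1:ℝ)] with u h2 h3 h4 h5
  set b0 : ℝ := (u - 1) ^ (1/ρ) with hb0
  set a0 : ℝ := (u + 1) ^ (1/ρ) with ha0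
  have hu1 : (0:ℝ) < u - 1 := by linarith
  have hb0pos : 0 < b0 := Real.rpow_pos_of_pos hu1 _
  have hΛb0 : 0 < Λ b0 := hΛpos _ hb0pos
  have hab : b0 ≤ a0 := by
    apply Real.rpow_le_rpow hu1.le (by linarith) (by positivity)
  have hac : a0 ≤ b0 * c := by
    have h6 : a0 ≤ (c ^ ρ * (u - 1)) ^ (1/ρ) :=
      Real.rpow_le_rpow (by linarith) h3 (by positivity)
    have h7 : (c ^ ρ * (u - 1)) ^ (1/ρ) = c * b0 := by
      rw [Real.mul_rpow (by positivity) hu1.le, ← Real.rpow_mul hcpos.le,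
        mul_one_div_cancel (ne_of_gt hρ), Real.rpow_one]
    rw [h7] at h6
    linarith [h6, mul_comm c b0]
  have hmemb : b0 ∈ Set.Ici x₀ := h4
  have hmema : a0 ∈ Set.Ici x₀ := le_trans h4 hab
  have hmembc : b0 * c ∈ Set.Ici x₀ := le_trans (le_trans h4 hab) hac
  have hΛab : Λ b0 ≤ Λ a0 := by
    rcases eq_or_lt_of_le hab with h | h
    · rw [h]
    · exact (hmono hmemb hmema h).le
  have hΛac : Λ a0 ≤ Λ (b0 * c) := by
    rcases eq_or_lt_of_le hac with h | h
    · rw [h]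
    · exact (hmono hmema hmembc h).le
  have hlow : 1 ≤ Λ a0 / Λ b0 := (one_le_div hΛb0).mpr hΛab
  have hhigh : Λ a0 / Λ b0 < 1 + ε := by
    have hd : Λ a0 / Λ b0 ≤ Λ (b0 * c) / Λ b0 := by
      gcongr
    linarith
  rw [Real.dist_eq, abs_sub_lt_iff]
  constructor <;> linarith


end AuxLemmas

theorem stmt5
    {Ω : Type*} [MeasurableSpace Ω] (μ : Measure Ω) [IsProbabilityMeasure μ]
    (Z : Ω → ℝ) (hZ : Measurable Z)
    (hpos : ∀ u : ℝ, 0 < (μ {ω | u < Z ω}).toReal)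
    (ρ α Istar : ℝ) (hρ : 0 < ρ) (hα : 0 < α) (hIstar : 0 < Istar)
    (Λ : ℝ → ℝ) (hΛpos : ∀ x : ℝ, 0 < x → 0 < Λ x)
    (hΛmono : ∃ x₀ : ℝ, StrictMonoOn Λ (Set.Ici x₀))
    (hΛtop : Tendsto Λ atTop atTop)
    (hΛRV : RegVary Λ α)
    (htail : Tendsto (fun u : ℝ => Real.log ((μ {ω | u < Z ω}).toReal) / Λ (u ^ (1 / ρ)))
      atTop (𝓝 (-Istar))) :
    (∀ δ : ℝ, 0 < δ → ∃ β₀ : ℝ, 0 < β₀ ∧ ∀ β : ℝ, 0 < β → β < β₀ →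
        β ^ (1 + δ) ≤ ∫ ω, (max (Z ω - VaR μ Z β) 0) ^ 2 ∂μ) ∧
    (∀ β : ℝ, 0 < β → β < 1 →
        (μ {ω | VaR μ Z β + 1 ≤ Z ω}).toReal ≤ ∫ ω, (max (Z ω - VaR μ Z β) 0) ^ 2 ∂μ) ∧
    Tendsto (fun β : ℝ => Real.log ((μ {ω | VaR μ Z β + 1 ≤ Z ω}).toReal) / Real.log β)
      (𝓝[>] (0 : ℝ)) (𝓝 1) := by
  obtain ⟨x₀, hmono⟩ := hΛmono
  set T : ℝ → ℝ := fun u => (μ {ω | u < Z ω}).toReal with hTdef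
  have hms : ∀ u : ℝ, MeasurableSet {ω | u < Z ω} := fun u =>
    measurableSet_lt measurable_const hZ
  have hTpos : ∀ u, 0 < T u := hpos
  have hTanti : ∀ u v : ℝ, u ≤ v → T v ≤ T u := by
    intro u v huv
    exact ENNReal.toReal_mono (measure_ne_top μ _)
      (measure_mono (fun ω h => lt_of_le_of_lt huv h))
  have hcompl : ∀ u : ℝ, (μ {ω | Z ω ≤ u}).toReal = 1 - T u := by
    intro u
    have hc : {ω | Z ω ≤ u} = {ω | u < Z ω}ᶜ := by ext ω; simp [not_lt]
    rw [hc, measure_compl (hms u) (measure_ne_top μ _), measure_univ,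
      ENNReal.toReal_sub_of_le prob_le_one ENNReal.one_ne_top, ENNReal.toReal_one]
  -- T tends to 0 at infinity
  have hΛρtop : Tendsto (fun u : ℝ => Λ (u ^ (1/ρ))) atTop atTop :=
    hΛtop.comp (tendsto_rpow_atTop (by positivity))
  have hLbot : Tendsto (fun u : ℝ => Real.log (T u)) atTop atBot := by
    have h1 : Tendsto (fun u : ℝ =>
        (Real.log (T u) / Λ (u ^ (1/ρ))) * Λ (u ^ (1/ρ))) atTop atBot :=
      Filter.Tendsto.neg_mul_atTop (by linarith : -Istar < 0) htail hΛρtop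
    apply h1.congr'
    filter_upwards [hΛρtop.eventually_gt_atTop 0] with u hu
    field_simp
  have hT0 : Tendsto T atTop (𝓝 0) := by
    have h1 : Tendsto (fun u => Real.exp (Real.log (T u))) atTop (𝓝 0) :=
      Real.tendsto_exp_atBot.comp hLbot
    apply h1.congr
    intro u
    exact Real.exp_log (hTpos u)
  -- set S
  set S : ℝ → Set ℝ := fun β => {u : ℝ | 1 - β ≤ (μ {ω | Z ω ≤ u}).toReal} with hSdef
  have hVaR_eq : ∀ β, VaR μ Z β = sInf (S β) := fun β => rfl
  have hSne : ∀ β : ℝ, 0 < β → (S β).Nonempty := by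
    intro β hβ
    obtain ⟨u, hu⟩ := (hT0.eventually_lt_const hβ).exists
    exact ⟨u, by simp only [hSdef, Set.mem_setOf_eq, hcompl]; linarith⟩
  have hlb : ∀ M β : ℝ, β < T M → ∀ u ∈ S β, M ≤ u := by
    intro M β hM u hu
    by_contra h
    push_neg at h
    have h1 : T M ≤ T u := hTanti u M h.le
    have h2 : 1 - β ≤ 1 - T u := by
      have := hu
      simp only [hSdef, Set.mem_setOf_eq, hcompl] at this
      linarith
    linarith
  have hTsup : ∀ β : ℝ, β < 1 → ∃ M : ℝ, β < T M := by
    intro β hβ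
    rcases le_or_gt β 0 with h | h
    · exact ⟨0, lt_of_le_of_lt h (hTpos 0)⟩
    · have hmon : Monotone (fun n : ℕ => {ω | -(n:ℝ) < Z ω}) := by
        intro m n hmn ω hω
        simp only [Set.mem_setOf_eq] at hω ⊢
        have hcast : -(n:ℝ) ≤ -(m:ℝ) := neg_le_neg (by exact_mod_cast hmn)
        linarith
      have hunion : ⋃ n : ℕ, {ω | -(n:ℝ) < Z ω} = Set.univ := by
        ext ω; simp only [Set.mem_iUnion, Set.mem_setOf_eq, Set.mem_univ, iff_true]
        obtain ⟨n, hn⟩ := exists_nat_gt (-Z ω)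
        exact ⟨n, by linarith⟩
      have hten : Tendsto (fun n : ℕ => μ {ω | -(n:ℝ) < Z ω}) atTop (𝓝 1) := by
        have := tendsto_measure_iUnion_atTop (μ := μ) hmon
        rwa [hunion, measure_univ] at this
      have hβ1 : ENNReal.ofReal β < 1 := by
        rw [← ENNReal.ofReal_one]
        exact ENNReal.ofReal_lt_ofReal_iff_of_nonneg h.le |>.mpr hβ
      obtain ⟨n, hn⟩ := (hten.eventually (eventually_gt_nhds hβ1)).exists
      refine ⟨-(n:ℝ), ?_⟩
      have := ENNReal.toReal_lt_toReal (a := ENNReal.ofReal β) (by simp) (measure_ne_top μ _) |>.mpr hn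
      rwa [ENNReal.toReal_ofReal h.le] at this
  -- per-β facts
  have hfacts : ∀ β : ℝ, 0 < β → β < 1 →
      β ≤ T (VaR μ Z β - 1) ∧ (μ {ω | VaR μ Z β + 1 ≤ Z ω}).toReal ≤ β := by
    intro β hβ0 hβ1
    obtain ⟨M, hM⟩ := hTsup β hβ1
    have hbdd : BddBelow (S β) := ⟨M, hlb M β hM⟩
    have hne : (S β).Nonempty := hSne β hβ0
    constructor
    · by_contra h
      push_neg at h
      have hin : VaR μ Z β - 1 ∈ S β := by
        simp only [hSdef, Set.mem_setOf_eq, hcompl]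
        linarith
      have := csInf_le hbdd hin
      rw [← hVaR_eq] at this
      linarith
    · obtain ⟨s, hsS, hslt⟩ : ∃ s ∈ S β, s < VaR μ Z β + 2⁻¹ := by
        apply exists_lt_of_csInf_lt hne
        rw [← hVaR_eq]
        linarith
      have hsub : {ω | VaR μ Z β + 1 ≤ Z ω} ⊆ {ω | s < Z ω} := by
        intro ω h
        simp only [Set.mem_setOf_eq] at h ⊢
        have : s < VaR μ Z β + 1 := by linarith
        linarith
      have h1 : (μ {ω | VaR μ Z β + 1 ≤ Z ω}).toReal ≤ T s :=
        ENNReal.toReal_mono (measure_ne_top μ _) (measure_mono hsub)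
      have h2 : T s ≤ β := by
        have h3 := hsS
        simp only [hSdef, Set.mem_setOf_eq, hcompl] at h3
        linarith
      linarith
  -- VaR tends to infinity
  have hVtop : Tendsto (fun β => VaR μ Z β) (𝓝[>] (0:ℝ)) atTop := by
    rw [tendsto_atTop]
    intro M
    have hTM := hTpos M
    have hmem : Set.Ioo (0:ℝ) (T M) ∈ 𝓝[>] (0:ℝ) :=
      Ioo_mem_nhdsGT_of_mem ⟨le_refl 0, hTM⟩
    filter_upwards [hmem] with β hβ
    rw [hVaR_eq]
    exact le_csInf (hSne β hβ.1) (hlb M β hβ.2)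
  -- tail bound T u ≤ u ^ (-4)
  have htail4 : ∃ u₁ : ℝ, 1 ≤ u₁ ∧ ∀ u, u₁ ≤ u → T u ≤ u ^ (-4 : ℝ) := by
    have h1 : ∀ᶠ u : ℝ in atTop, Real.log (T u) / Λ (u ^ (1/ρ)) < -(Istar/2) :=
      htail.eventually_lt_const (by linarith)
    have h2 : ∀ᶠ u : ℝ in atTop, 0 < Λ (u ^ (1/ρ)) := hΛρtop.eventually_gt_atTop 0
    have h3 : ∀ᶠ t : ℝ in atTop, (8 * ρ / Istar) * Real.log t ≤ Λ t :=
      lam_log_lower Λ α hα hΛpos x₀ hmono hΛRV _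
    have h4 : ∀ᶠ u : ℝ in atTop, (8 * ρ / Istar) * Real.log (u ^ (1/ρ)) ≤ Λ (u ^ (1/ρ)) :=
      (tendsto_rpow_atTop (by positivity : 0 < 1/ρ)).eventually h3
    have h5 : ∀ᶠ u : ℝ in atTop, T u ≤ u ^ (-4 : ℝ) := by
      filter_upwards [h1, h2, h4, eventually_ge_atTop (1:ℝ)] with u hu1 hu2 hu4 hu5
      have hupos : (0:ℝ) < u := by linarith
      have hlog : Real.log (u ^ (1/ρ)) = (1/ρ) * Real.log u := Real.log_rpow hupos _
      have hlognn : 0 ≤ Real.log u := Real.log_nonneg hu5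
      have hA : Real.log (T u) ≤ -(Istar/2) * Λ (u ^ (1/ρ)) := by
        rw [div_lt_iff₀ hu2] at hu1
        linarith
      have hB : (4:ℝ) * Real.log u ≤ (Istar/2) * Λ (u ^ (1/ρ)) := by
        rw [hlog] at hu4
        have := mul_le_mul_of_nonneg_left hu4 (by positivity : (0:ℝ) ≤ Istar/2)
        calc (4:ℝ) * Real.log u
            = (Istar/2) * ((8 * ρ / Istar) * ((1/ρ) * Real.log u)) := by
              field_simp
              ring
          _ ≤ (Istar/2) * Λ (u ^ (1/ρ)) := this
      have hC : Real.log (T u) ≤ (-4) * Real.log u := by linarith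
      have := Real.exp_le_exp.mpr hC
      rwa [Real.exp_log (hTpos u), mul_comm, ← Real.rpow_def_of_pos hupos] at this
    obtain ⟨a, ha⟩ := eventually_atTop.mp h5
    exact ⟨max a 1, le_max_right _ _, fun u hu => ha u (le_trans (le_max_left _ _) hu)⟩
  obtain ⟨u₁, hu₁1, hu₁⟩ := htail4
  -- integrability
  have hg_meas : ∀ v : ℝ, Measurable (fun ω => max (Z ω - v) 0) := fun v =>
    (hZ.sub measurable_const).max measurable_const
  have hInt : ∀ v : ℝ, Integrable (fun ω => (max (Z ω - v) 0) ^ 2) μ := by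
    intro v
    have hf_meas : Measurable (fun ω => (max (Z ω - v) 0) ^ 2) := (hg_meas v).pow_const 2
    refine ⟨hf_meas.aestronglyMeasurable, ?_⟩
    rw [hasFiniteIntegral_iff_ofReal (Eventually.of_forall (fun ω => by positivity))]
    rw [lintegral_eq_lintegral_meas_lt μ (Eventually.of_forall (fun ω => by positivity))
      hf_meas.aemeasurable]
    set s₂ : ℝ := max (u₁ - v) (max (-2*v) 1) with hs₂def
    have hs₂1 : (1:ℝ) ≤ s₂ := le_trans (le_max_right _ _) (le_max_right _ _)
    have hs₂pos : (0:ℝ) < s₂ := by linarith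
    set t₂ : ℝ := s₂ ^ 2 with ht₂def
    have ht₂pos : (0:ℝ) < t₂ := by positivity
    -- set identity
    have hsetid : ∀ t : ℝ, 0 < t →
        {a | t < (max (Z a - v) 0) ^ 2} = {a | v + Real.sqrt t < Z a} := by
      intro t ht
      ext a
      simp only [Set.mem_setOf_eq]
      constructor
      · intro h
        have hm : 0 ≤ max (Z a - v) 0 := le_max_right _ _
        have hst : Real.sqrt t < max (Z a - v) 0 := by
          have := Real.sqrt_lt_sqrt ht.le h
          rwa [Real.sqrt_sq hm] at this
        have hst0 : 0 ≤ Real.sqrt t := Real.sqrt_nonneg t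
        have : Real.sqrt t < Z a - v := by
          rcases max_cases (Z a - v) 0 with ⟨he, _⟩ | ⟨he, _⟩
          · rwa [he] at hst
          · rw [he] at hst; linarith
        linarith
      · intro h
        have h1 : Real.sqrt t < Z a - v := by linarith
        have h2 : Real.sqrt t < max (Z a - v) 0 := lt_of_lt_of_le h1 (le_max_left _ _)
        have h3 := pow_lt_pow_left₀ h2 (Real.sqrt_nonneg t) two_ne_zero
        rwa [Real.sq_sqrt ht.le] at h3
    -- split the integral
    rw [← Set.Ioc_union_Ioi_eq_Ioi ht₂pos.le,
      lintegral_union measurableSet_Ioi (Set.Ioc_disjoint_Ioi le_rfl)]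
    have hI1 : ∫⁻ t in Set.Ioc 0 t₂, μ {a | t < (max (Z a - v) 0) ^ 2} ≤ ENNReal.ofReal t₂ := by
      calc ∫⁻ t in Set.Ioc 0 t₂, μ {a | t < (max (Z a - v) 0) ^ 2}
          ≤ ∫⁻ _ in Set.Ioc 0 t₂, 1 := lintegral_mono (fun t => prob_le_one)
        _ = volume (Set.Ioc (0:ℝ) t₂) := setLIntegral_one _
        _ = ENNReal.ofReal t₂ := by rw [Real.volume_Ioc, sub_zero]
    have hI2 : ∫⁻ t in Set.Ioi t₂, μ {a | t < (max (Z a - v) 0) ^ 2} ≤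
        ∫⁻ t in Set.Ioi t₂, ENNReal.ofReal (16 * t ^ (-2 : ℝ)) := by
      apply setLIntegral_mono
        (Measurable.ennreal_ofReal (measurable_const.mul (measurable_id.pow measurable_const)))
      intro t ht
      simp only [Set.mem_Ioi] at ht
      have htpos : (0:ℝ) < t := lt_of_lt_of_le ht₂pos ht.le
      rw [hsetid t htpos]
      have hsq : s₂ ≤ Real.sqrt t := by
        rw [show s₂ = Real.sqrt t₂ from (Real.sqrt_sq hs₂pos.le).symm]
        exact Real.sqrt_le_sqrt ht.le
      have hsqpos : (0:ℝ) < Real.sqrt t := lt_of_lt_of_le hs₂pos hsq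
      have hu₁le : u₁ ≤ v + Real.sqrt t := by
        have : u₁ - v ≤ s₂ := le_max_left _ _
        linarith
      have hhalf : Real.sqrt t / 2 ≤ v + Real.sqrt t := by
        have : -2*v ≤ s₂ := le_trans (le_max_left _ _) (le_max_right _ _)
        linarith
      have hupos : (0:ℝ) < v + Real.sqrt t := by
        have : (1:ℝ) ≤ s₂ := hs₂1
        linarith [lt_of_lt_of_le (show (0:ℝ) < s₂/2 by linarith) (by linarith : s₂/2 ≤ Real.sqrt t / 2)]
      have hTb := hu₁ (v + Real.sqrt t) hu₁le
      have hb2 : (v + Real.sqrt t) ^ (-4:ℝ) ≤ 16 * t ^ (-2:ℝ) := by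
        have he1 : (v + Real.sqrt t) ^ (-4:ℝ) = ((v + Real.sqrt t) ^ (4:ℕ))⁻¹ := by
          rw [← Real.rpow_natCast (v + Real.sqrt t) 4, ← Real.rpow_neg hupos.le]
          norm_num
        have he2 : t ^ (-2:ℝ) = (t ^ (2:ℕ))⁻¹ := by
          rw [← Real.rpow_natCast t 2, ← Real.rpow_neg htpos.le]
          norm_num
        rw [he1, he2]
        have hkey : (Real.sqrt t / 2) ^ (4:ℕ) ≤ (v + Real.sqrt t) ^ (4:ℕ) :=
          pow_le_pow_left₀ (by positivity) hhalf 4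
        have hsq4 : (Real.sqrt t / 2) ^ (4:ℕ) = t ^ (2:ℕ) / 16 := by
          have : Real.sqrt t ^ (2:ℕ) = t := Real.sq_sqrt htpos.le
          field_simp
          nlinarith [this]
        rw [hsq4] at hkey
        have hpos4 : (0:ℝ) < t ^ (2:ℕ) / 16 := by positivity
        have h6 := one_div_le_one_div_of_le hpos4 hkey
        rw [one_div_div] at h6
        calc ((v + Real.sqrt t) ^ (4:ℕ))⁻¹ = 1 / (v + Real.sqrt t) ^ (4:ℕ) := by
              rw [one_div]
          _ ≤ 16 / t ^ (2:ℕ) := h6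
          _ = 16 * (t ^ (2:ℕ))⁻¹ := by ring
      calc μ {a | v + Real.sqrt t < Z a} = ENNReal.ofReal (T (v + Real.sqrt t)) :=
            (ENNReal.ofReal_toReal (measure_ne_top μ _)).symm
        _ ≤ ENNReal.ofReal (16 * t ^ (-2:ℝ)) :=
            ENNReal.ofReal_le_ofReal (le_trans hTb hb2)
    have hI2fin : ∫⁻ t in Set.Ioi t₂, ENNReal.ofReal (16 * t ^ (-2 : ℝ)) < ⊤ := by
      have hint : IntegrableOn (fun t : ℝ => 16 * t ^ (-2:ℝ)) (Set.Ioi t₂) := by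
        exact (integrableOn_Ioi_rpow_of_lt (by norm_num) ht₂pos).const_mul 16
      have := hint.2
      rw [hasFiniteIntegral_iff_ofReal] at this
      · exact this
      · filter_upwards [self_mem_ae_restrict measurableSet_Ioi] with t ht
        have : (0:ℝ) < t := lt_of_lt_of_le ht₂pos (le_of_lt ht)
        positivity
    calc (∫⁻ t in Set.Ioc 0 t₂, μ {a | t < (max (Z a - v) 0) ^ 2})
          + ∫⁻ t in Set.Ioi t₂, μ {a | t < (max (Z a - v) 0) ^ 2}
        ≤ ENNReal.ofReal t₂ + ∫⁻ t in Set.Ioi t₂, ENNReal.ofReal (16 * t ^ (-2 : ℝ)) :=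
          add_le_add hI1 hI2
      _ < ⊤ := ENNReal.add_lt_top.mpr ⟨ENNReal.ofReal_lt_top, hI2fin⟩
  -- Part 2
  have hPart2 : ∀ v : ℝ, (μ {ω | v + 1 ≤ Z ω}).toReal ≤
      ∫ ω, (max (Z ω - v) 0) ^ 2 ∂μ := by
    intro v
    have hAms : MeasurableSet {ω | v + 1 ≤ Z ω} := measurableSet_le measurable_const hZ
    have hind : ∫ ω, Set.indicator {ω | v + 1 ≤ Z ω} (fun _ => (1:ℝ)) ω ∂μ
        = (μ {ω | v + 1 ≤ Z ω}).toReal := by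
      rw [integral_indicator_const (1:ℝ) hAms, smul_eq_mul, mul_one, measureReal_def]
    rw [← hind]
    apply integral_mono ((integrable_const (1:ℝ)).indicator hAms) (hInt v)
    intro ω
    by_cases h : ω ∈ {ω | v + 1 ≤ Z ω}
    · rw [Set.indicator_of_mem h]
      have h1 : (1:ℝ) ≤ max (Z ω - v) 0 := by
        simp only [Set.mem_setOf_eq] at h
        exact le_max_of_le_left (by linarith)
      calc (1:ℝ) = 1 * 1 := by ring
        _ ≤ max (Z ω - v) 0 * max (Z ω - v) 0 :=
            mul_le_mul h1 h1 zero_le_one (le_trans zero_le_one h1)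
        _ = (max (Z ω - v) 0) ^ 2 := (sq (max (Z ω - v) 0)).symm
    · rw [Set.indicator_of_notMem h]
      positivity
  -- ratio of logs tends to 1
  have hratioΛ := lam_shift_ratio Λ α hα hΛpos x₀ hmono hΛRV ρ hρ
  have hshiftm : Tendsto (fun u : ℝ => Real.log (T (u-1)) / Λ ((u-1) ^ (1/ρ)))
      atTop (𝓝 (-Istar)) := by
    have h1 : Tendsto (fun u : ℝ => u - 1) atTop atTop :=
      tendsto_atTop_add_const_right _ (-1) tendsto_id
    exact htail.comp h1
  have hshiftp : Tendsto (fun u : ℝ => Real.log (T (u+1)) / Λ ((u+1) ^ (1/ρ)))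
      atTop (𝓝 (-Istar)) := by
    have h1 : Tendsto (fun u : ℝ => u + 1) atTop atTop :=
      tendsto_atTop_add_const_right _ 1 tendsto_id
    exact htail.comp h1
  have hLm_neg : ∀ᶠ u : ℝ in atTop, Real.log (T (u-1)) < 0 := by
    have h1 : Tendsto (fun u : ℝ => Real.log (T (u-1))) atTop atBot :=
      hLbot.comp (tendsto_atTop_add_const_right _ (-1) tendsto_id)
    exact h1.eventually_lt_atBot 0
  have hΛm_pos : ∀ᶠ u : ℝ in atTop, 0 < Λ ((u-1) ^ (1/ρ)) := by
    have h1 : Tendsto (fun u : ℝ => Λ ((u-1) ^ (1/ρ))) atTop atTop :=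
      hΛρtop.comp (tendsto_atTop_add_const_right _ (-1) tendsto_id)
    exact h1.eventually_gt_atTop 0
  have hΛp_pos : ∀ᶠ u : ℝ in atTop, 0 < Λ ((u+1) ^ (1/ρ)) := by
    have h1 : Tendsto (fun u : ℝ => Λ ((u+1) ^ (1/ρ))) atTop atTop :=
      hΛρtop.comp (tendsto_atTop_add_const_right _ 1 tendsto_id)
    exact h1.eventually_gt_atTop 0
  have hL1 : Tendsto (fun u : ℝ => Real.log (T (u+1)) / Real.log (T (u-1)))
      atTop (𝓝 1) := by
    have hprod : Tendsto (fun u : ℝ =>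
        (Real.log (T (u+1)) / Λ ((u+1) ^ (1/ρ)))
        * (Λ ((u+1) ^ (1/ρ)) / Λ ((u-1) ^ (1/ρ)))
        / (Real.log (T (u-1)) / Λ ((u-1) ^ (1/ρ)))) atTop
        (𝓝 ((-Istar) * 1 / (-Istar))) :=
      (hshiftp.mul hratioΛ).div hshiftm (by simp only [ne_eq, neg_eq_zero]; exact ne_of_gt hIstar)
    have heq : ((-Istar) * 1 / (-Istar)) = 1 := by field_simp
    rw [heq] at hprod
    apply hprod.congr'
    filter_upwards [hLm_neg, hΛm_pos, hΛp_pos] with u h1 h2 h3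
    field_simp
  -- master eventual bound
  have keyP : ∀ δ : ℝ, 0 < δ → ∀ᶠ β in 𝓝[>] (0:ℝ),
      β ^ (1 + δ) ≤ (μ {ω | VaR μ Z β + 1 ≤ Z ω}).toReal ∧
      (μ {ω | VaR μ Z β + 1 ≤ Z ω}).toReal ≤ β ∧ 0 < β ∧ β < 1 := by
    intro δ hδ
    have hE : ∀ᶠ u : ℝ in atTop,
        (1 + δ) * Real.log (T (u-1)) ≤ Real.log (T (u+1)) := by
      have h1 : ∀ᶠ u : ℝ in atTop,
          Real.log (T (u+1)) / Real.log (T (u-1)) < 1 + δ :=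
        hL1.eventually_lt_const (by linarith)
      filter_upwards [h1, hLm_neg] with u hu1 hu2
      rw [div_lt_iff_of_neg hu2] at hu1
      linarith
    have hEv : ∀ᶠ β in 𝓝[>] (0:ℝ),
        (1 + δ) * Real.log (T (VaR μ Z β - 1)) ≤ Real.log (T (VaR μ Z β + 1)) :=
      hVtop.eventually hE
    have hβpos : ∀ᶠ β in 𝓝[>] (0:ℝ), 0 < β := eventually_mem_nhdsWithin
    have hβlt1 : ∀ᶠ β in 𝓝[>] (0:ℝ), β < 1 :=
      eventually_nhdsWithin_of_eventually_nhds (eventually_lt_nhds one_pos)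
    filter_upwards [hEv, hβpos, hβlt1] with β hβE hβ0 hβ1
    obtain ⟨hfact1, hfact2⟩ := hfacts β hβ0 hβ1
    refine ⟨?_, hfact2, hβ0, hβ1⟩
    have hlogβ : Real.log β ≤ Real.log (T (VaR μ Z β - 1)) :=
      Real.log_le_log hβ0 hfact1
    have h2 : (1 + δ) * Real.log β ≤ Real.log (T (VaR μ Z β + 1)) := by
      have := mul_le_mul_of_nonneg_left hlogβ (by linarith : (0:ℝ) ≤ 1 + δ)
      linarith
    have h3 : β ^ (1 + δ) ≤ T (VaR μ Z β + 1) := by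
      have := Real.exp_le_exp.mpr h2
      rwa [Real.exp_log (hTpos _), mul_comm, ← Real.rpow_def_of_pos hβ0] at this
    have h4 : T (VaR μ Z β + 1) ≤ (μ {ω | VaR μ Z β + 1 ≤ Z ω}).toReal := by
      apply ENNReal.toReal_mono (measure_ne_top μ _)
      apply measure_mono
      intro ω hω
      simp only [Set.mem_setOf_eq] at hω ⊢
      exact le_of_lt hω
    linarith
  refine ⟨?_, fun β _ _ => hPart2 (VaR μ Z β), ?_⟩
  · intro δ hδ
    obtain ⟨ε₀, hε₀, hsub⟩ := mem_nhdsGT_iff_exists_Ioo_subset.mp (keyP δ hδ)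
    refine ⟨ε₀, hε₀, fun β hβ0 hββ₀ => ?_⟩
    have hβmem := hsub ⟨hβ0, hββ₀⟩
    obtain ⟨h1, h2, _, _⟩ := hβmem
    exact le_trans h1 (hPart2 (VaR μ Z β))
  · rw [Metric.tendsto_nhds]
    intro ε hε
    filter_upwards [keyP (ε/2) (by linarith)] with β ⟨h1, h2, hβ0, hβ1⟩
    set P := (μ {ω | VaR μ Z β + 1 ≤ Z ω}).toReal with hPdef
    have hPpos : 0 < P := lt_of_lt_of_le (Real.rpow_pos_of_pos hβ0 _) h1
    have hlogβneg : Real.log β < 0 := Real.log_neg hβ0 hβ1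
    have hup : Real.log P ≤ Real.log β := Real.log_le_log hPpos h2
    have hdown : (1 + ε/2) * Real.log β ≤ Real.log P := by
      have := Real.log_le_log (Real.rpow_pos_of_pos hβ0 _) h1
      rwa [Real.log_rpow hβ0] at this
    have hr1 : 1 ≤ Real.log P / Real.log β := by
      rw [le_div_iff_of_neg hlogβneg]
      linarith
    have hr2 : Real.log P / Real.log β ≤ 1 + ε/2 := by
      rw [div_le_iff_of_neg hlogβneg]
      linarith
    rw [Real.dist_eq, abs_sub_lt_iff]
    constructor <;> linarith
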